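/- Let T = (U, E) be a finite tree with leaf set V ⊆ U and let R = (ρ_{ij})_{i,j ∈ V} be a symmetric matrix with ρ_{ii} = 1 and ρ_{ij} ≠ 0 for all distinct i, j. Suppose that ρ_{ij} ρ_{ik} ρ_{jk} ≥ 0 for all distinct i, j, k ∈ V, and that there exist edge weights w_e ∈ [0,1], e ∈ E, with |ρ_{ij}| = ∏_{e ∈ ph(i,j)} w_e for all distinct i, j ∈ V. Then there exist edge weights ρ_e ∈ [−1,1], e ∈ E, such that ρ_{ij} = ∏_{e ∈ ph(i,j)} ρ_e for all distinct i, j ∈ V; that is, R belongs to the Gaussian latent tree model M(T). -/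

import Mathlib

lemma sign_helper (a b c : ℝ) (ha : a ≠ 0) (hb : b ≠ 0) (hc : c ≠ 0)
    (h : 0 ≤ a * b * c) : c = (a / |a|) * (b / |b|) * |c| := by
  rcases ha.lt_or_gt with ha' | ha'
  · rcases hb.lt_or_gt with hb' | hb'
    · have hab : 0 < a * b := mul_pos_of_neg_of_neg ha' hb'
      have hcpos : 0 < c := by
        rcases hc.lt_or_gt with hc' | hc'
        · nlinarith
        · exact hc'
      rw [abs_of_neg ha', abs_of_neg hb', abs_of_pos hcpos]
      field_simp
    · have hab : a * b < 0 := mul_neg_of_neg_of_pos ha' hb'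
      have hcneg : c < 0 := by
        rcases hc.lt_or_gt with hc' | hc'
        · exact hc'
        · nlinarith
      rw [abs_of_neg ha', abs_of_pos hb', abs_of_neg hcneg]
      field_simp
  · rcases hb.lt_or_gt with hb' | hb'
    · have hab : a * b < 0 := mul_neg_of_pos_of_neg ha' hb'
      have hcneg : c < 0 := by
        rcases hc.lt_or_gt with hc' | hc'
        · exact hc'
        · nlinarith
      rw [abs_of_pos ha', abs_of_neg hb', abs_of_neg hcneg]
      field_simp
    · have hab : 0 < a * b := mul_pos ha' hb'
      have hcpos : 0 < c := by
        rcases hc.lt_or_gt with hc' | hc'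
        · nlinarith
        · exact hc'
      rw [abs_of_pos ha', abs_of_pos hb', abs_of_pos hcpos]
      field_simp

lemma uniq_incident {U : Type*} [Fintype U] [DecidableEq U] (G : SimpleGraph U)
    [DecidableRel G.Adj] {v : U} (hv : G.degree v = 1) {e₁ e₂ : Sym2 U}
    (h₁ : e₁ ∈ G.edgeSet) (h₂ : e₂ ∈ G.edgeSet) (hv₁ : v ∈ e₁) (hv₂ : v ∈ e₂) :
    e₁ = e₂ := by
  obtain ⟨a, rfl⟩ := Sym2.mem_iff_exists.mp hv₁
  obtain ⟨b, rfl⟩ := Sym2.mem_iff_exists.mp hv₂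
  have ha : G.Adj v a := h₁
  have hb : G.Adj v b := h₂
  have hab : a = b := by
    have ha' : a ∈ G.neighborFinset v := by simpa using ha
    have hb' : b ∈ G.neighborFinset v := by simpa using hb
    exact Finset.card_le_one.mp (le_of_eq hv) a ha' b hb'
  rw [hab]

lemma leaf_not_mem_path_edge {U : Type*} [Fintype U] [DecidableEq U] (G : SimpleGraph U)
    [DecidableRel G.Adj] {u v x : U} (hx : G.degree x = 1) (hxu : x ≠ u) (hxv : x ≠ v)
    (p : G.Walk u v) (hp : p.IsPath) {e : Sym2 U} (he : e ∈ p.edges) : x ∉ e := by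
  intro hxe
  obtain ⟨a, rfl⟩ := Sym2.mem_iff_exists.mp hxe
  have hsupp : x ∈ p.support := p.fst_mem_support_of_mem_edges he
  obtain ⟨q, r, rfl⟩ := SimpleGraph.Walk.mem_support_iff_exists_append.mp hsupp
  have hq : ¬ q.reverse.Nil := SimpleGraph.Walk.not_nil_of_ne hxu
  obtain ⟨u₁, hadj₁, q₁, hq₁⟩ := SimpleGraph.Walk.not_nil_iff.mp hq
  have he₁ : s(x, u₁) ∈ q.edges := by
    have h1 : s(x, u₁) ∈ q.reverse.edges := by rw [hq₁]; simp
    simpa [SimpleGraph.Walk.edges_reverse] using h1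
  have hr : ¬ r.Nil := SimpleGraph.Walk.not_nil_of_ne hxv
  obtain ⟨u₂, hadj₂, r₁, hr₁⟩ := SimpleGraph.Walk.not_nil_iff.mp hr
  have he₂ : s(x, u₂) ∈ r.edges := by rw [hr₁]; simp
  have hnodup := hp.isTrail.edges_nodup
  rw [SimpleGraph.Walk.edges_append] at hnodup
  have hdisj := (List.nodup_append'.mp hnodup).2.2
  have hne : s(x, u₁) ≠ s(x, u₂) := fun h => hdisj he₁ (h ▸ he₂)
  exact hne (uniq_incident G hx (q.edges_subset_edgeSet he₁) (r.edges_subset_edgeSet he₂)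
    (by simp) (by simp))

theorem abs_orange_and_signs_mem_latent_tree
    {U L : Type*} [Fintype U] [DecidableEq U] [Fintype L]
    (G : SimpleGraph U) [DecidableRel G.Adj] (hG : G.IsTree)
    (ι : L ↪ U) (hleaf : ∀ x : L, G.degree (ι x) = 1)
    (ph : U → U → Finset (Sym2 U))
    (hph : ∀ u v : U, ∃ p : G.Walk u v, p.IsPath ∧ p.edges.toFinset = ph u v)
    (ρ : L → L → ℝ)
    (hsym : ∀ i j : L, ρ i j = ρ j i)
    (hdiag : ∀ i : L, ρ i i = 1)
    (hne : ∀ i j : L, i ≠ j → ρ i j ≠ 0)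
    (htri : ∀ i j k : L, i ≠ j → i ≠ k → j ≠ k → 0 ≤ ρ i j * ρ i k * ρ j k)
    (w : Sym2 U → ℝ) (hw : ∀ e ∈ G.edgeSet, w e ∈ Set.Icc (0 : ℝ) 1)
    (habs : ∀ i j : L, i ≠ j → |ρ i j| = ∏ e ∈ ph (ι i) (ι j), w e) :
    ∃ ρe : Sym2 U → ℝ,
      (∀ e ∈ G.edgeSet, ρe e ∈ Set.Icc (-1 : ℝ) 1) ∧
      ∀ i j : L, i ≠ j → ρ i j = ∏ e ∈ ph (ι i) (ι j), ρe e := by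
  classical
  by_cases hLe : IsEmpty L
  · exact ⟨w, fun e he => ⟨by linarith [(hw e he).1], (hw e he).2⟩,
      fun i => (hLe.false i).elim⟩
  rw [not_isEmpty_iff] at hLe
  obtain ⟨i0⟩ := hLe
  set σ : L → ℝ := fun x => if x = i0 then 1 else ρ i0 x / |ρ i0 x| with hσdef
  have hσabs : ∀ x, |σ x| = 1 := by
    intro x
    by_cases hx : x = i0
    · simp [hσdef, hx]
    · have hne' := hne i0 x (fun h => hx h.symm)
      simp [hσdef, hx, abs_div, abs_abs, div_self (abs_ne_zero.mpr hne')]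
  have hσsign : ∀ i j : L, i ≠ j → ρ i j = σ i * σ j * |ρ i j| := by
    intro i j hij
    by_cases hi : i = i0
    · have hi0j : i0 ≠ j := hi ▸ hij
      have hj : ¬ (j = i0) := fun h => hi0j h.symm
      simp only [hσdef, if_pos hi, if_neg hj, one_mul]
      rw [hi, div_mul_cancel₀ _ (abs_ne_zero.mpr (hne i0 j hi0j))]
    · by_cases hj : j = i0
      · have hi0i : i0 ≠ i := fun h => hi h.symm
        simp only [hσdef, if_pos hj, if_neg hi, mul_one]
        rw [hj, hsym i i0, div_mul_cancel₀ _ (abs_ne_zero.mpr (hne i0 i hi0i))]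
      · have htri' := htri i0 i j (fun h => hi h.symm) (fun h => hj h.symm) hij
        have hkey := sign_helper (ρ i0 i) (ρ i0 j) (ρ i j)
          (hne i0 i (fun h => hi h.symm)) (hne i0 j (fun h => hj h.symm)) (hne i j hij) htri'
        simpa [hσdef, hi, hj] using hkey
  refine ⟨fun e => w e * ∏ x ∈ Finset.univ.filter (fun x : L => ι x ∈ e), σ x, ?_, ?_⟩
  · intro e he
    have habs1 : |w e * ∏ x ∈ Finset.univ.filter (fun x : L => ι x ∈ e), σ x| ≤ 1 := by
      rw [abs_mul, Finset.abs_prod]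
      have h1 : ∏ x ∈ Finset.univ.filter (fun x : L => ι x ∈ e), |σ x| = 1 := by
        rw [Finset.prod_congr rfl (fun x _ => hσabs x), Finset.prod_const_one]
      rw [h1, mul_one, abs_of_nonneg (hw e he).1]
      exact (hw e he).2
    exact Set.mem_Icc.mpr (abs_le.mp habs1)
  · intro i j hij
    obtain ⟨p, hp, hpe⟩ := hph (ι i) (ι j)
    have hije : ι i ≠ ι j := fun h => hij (ι.injective h)
    have hmem : ∀ e, e ∈ ph (ι i) (ι j) ↔ e ∈ p.edges := by
      intro e; rw [← hpe, List.mem_toFinset]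
    rw [hσsign i j hij, habs i j hij, Finset.prod_mul_distrib]
    suffices hS : (∏ e ∈ ph (ι i) (ι j),
        ∏ x ∈ Finset.univ.filter (fun x : L => ι x ∈ e), σ x) = σ i * σ j by
      rw [hS]; ring
    have hex : ∀ x : L, x = i ∨ x = j → ∃ e₀ ∈ ph (ι i) (ι j), ι x ∈ e₀ := by
      rintro x (rfl | rfl)
      · obtain ⟨u₁, hadj, q, hq⟩ := SimpleGraph.Walk.not_nil_iff.mp
          (SimpleGraph.Walk.not_nil_of_ne (p := p) hije)
        refine ⟨s(ι x, u₁), (hmem _).mpr ?_, by simp⟩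
        rw [hq]; simp
      · obtain ⟨u₁, hadj, q, hq⟩ := SimpleGraph.Walk.not_nil_iff.mp
          (SimpleGraph.Walk.not_nil_of_ne (p := p.reverse) hije.symm)
        refine ⟨s(ι x, u₁), (hmem _).mpr ?_, ?_⟩
        · have h1 : s(ι x, u₁) ∈ p.reverse.edges := by rw [hq]; simp
          simpa [SimpleGraph.Walk.edges_reverse] using h1
        · simp
    calc (∏ e ∈ ph (ι i) (ι j), ∏ x ∈ Finset.univ.filter (fun x : L => ι x ∈ e), σ x)
        = ∏ e ∈ ph (ι i) (ι j), ∏ x : L, if ι x ∈ e then σ x else 1 :=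
          Finset.prod_congr rfl (fun e _ => Finset.prod_filter _ _)
      _ = ∏ x : L, ∏ e ∈ ph (ι i) (ι j), if ι x ∈ e then σ x else 1 := Finset.prod_comm
      _ = ∏ x : L, if x = i ∨ x = j then σ x else 1 := by
          refine Finset.prod_congr rfl (fun x _ => ?_)
          by_cases hx : x = i ∨ x = j
          · rw [if_pos hx]
            obtain ⟨e₀, he₀, hxe₀⟩ := hex x hx
            rw [← Finset.prod_filter]
            have hfilt : (ph (ι i) (ι j)).filter (fun e => ι x ∈ e) = {e₀} := by
              ext e
              simp only [Finset.mem_filter, Finset.mem_singleton]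
              constructor
              · rintro ⟨hep, hxe⟩
                exact uniq_incident G (hleaf x)
                  (p.edges_subset_edgeSet ((hmem e).mp hep))
                  (p.edges_subset_edgeSet ((hmem e₀).mp he₀)) hxe hxe₀
              · rintro rfl
                exact ⟨he₀, hxe₀⟩
            rw [hfilt, Finset.prod_singleton]
          · rw [if_neg hx]
            push_neg at hx
            refine Finset.prod_eq_one (fun e he => if_neg ?_)
            exact leaf_not_mem_path_edge G (hleaf x)
              (fun h => hx.1 (ι.injective h)) (fun h => hx.2 (ι.injective h))
              p hp ((hmem e).mp he)
      _ = σ i * σ j := by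
          rw [← Finset.prod_filter]
          have hfilt : Finset.univ.filter (fun x : L => x = i ∨ x = j) = {i, j} := by
            ext x; simp
          rw [hfilt, Finset.prod_pair hij]
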